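/- Let (G,𝒳,k) be a Yes-instance of VDP where G is a split graph with split partition (C, I), and let 𝒫 be a minimum solution of (G,𝒳,k). If some path P ∈ 𝒫 visits a non-terminal vertex x ∈ I, then P is of the form (u', x, v'), where u', v' ∈ C are terminal vertices (the endpoints of P), and moreover the one-edge path P_{u'v'} also belongs to 𝒫. -/

import Mathlib

open SimpleGraph Finset

/-- A family of walks in `G` connecting the terminal pairs `X`. -/
abbrev WalkFamily {V : Type*} (G : SimpleGraph V) {ι : Type*} (X : ι → V × V) :=
  ∀ i : ι, G.Walk (X i).1 (X i).2

/-- No internal vertex of one walk of the family lies on any other walk. -/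
def PairwiseInternallyDisjoint {V : Type*} (G : SimpleGraph V) {ι : Type*}
    (X : ι → V × V) (P : WalkFamily G X) : Prop :=
  ∀ i j : ι, i ≠ j → ∀ x : V, x ∈ (P i).support.tail.dropLast → x ∉ (P j).support

/-- A solution of the Vertex-Disjoint Paths (VDP) instance `(G, X)`: a family of pairwise
distinct paths connecting the terminal pairs that are pairwise internally vertex-disjoint. -/
def IsVDPSolution {V : Type*} (G : SimpleGraph V) {ι : Type*} (X : ι → V × V)
    (P : WalkFamily G X) : Prop :=
  (∀ i, (P i).IsPath) ∧
  (∀ i j : ι, i ≠ j → (P i).support ≠ (P j).support) ∧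
  PairwiseInternallyDisjoint G X P

/-- `(G, X)` is a Yes-instance of VDP. -/
def VDPYes {V : Type*} (G : SimpleGraph V) {ι : Type*} (X : ι → V × V) : Prop :=
  ∃ P : WalkFamily G X, IsVDPSolution G X P

/-- A minimum solution of the VDP instance `(G, X)`: a solution minimizing the total
number of edges of the paths. -/
def IsMinVDPSolution {V : Type*} (G : SimpleGraph V) {ι : Type*} [Fintype ι]
    (X : ι → V × V) (P : WalkFamily G X) : Prop :=
  IsVDPSolution G X P ∧
    ∀ Q : WalkFamily G X, IsVDPSolution G X Q →
      ∑ i, (P i).length ≤ ∑ i, (Q i).length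

/-- `(C, I)` is a split partition of `G`: `V(G)` is the disjoint union of `C` and `I`,
`C` induces a clique, and `I` is an independent set. -/
def IsSplitPartition {V : Type*} (G : SimpleGraph V) (C I : Finset V) : Prop :=
  (∀ x : V, x ∈ C ∨ x ∈ I) ∧ (∀ x : V, ¬ (x ∈ C ∧ x ∈ I)) ∧
  (∀ x ∈ C, ∀ y ∈ C, x ≠ y → G.Adj x y) ∧ (∀ x ∈ I, ∀ y ∈ I, ¬ G.Adj x y)

/-- `y` is a terminal vertex: it appears in at least one terminal pair of `X`. -/
def IsTerminal {V : Type*} {ι : Type*} (X : ι → V × V) (y : V) : Prop :=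
  ∃ i : ι, (X i).1 = y ∨ (X i).2 = y

/-- In a minimum VDP solution on a split graph, a path visiting a
non-terminal vertex `x` of the independent side has the form `(u', x, v')` with `u', v'`
in the clique side, and the one-edge path between `u'` and `v'` also belongs to the
solution. -/
private lemma walk_exists_cons {V : Type*} {G : SimpleGraph V} {u v : V} (p : G.Walk u v)
    (h : u ≠ v) : ∃ b, ∃ hadj : G.Adj u b, ∃ q : G.Walk b v, p = Walk.cons hadj q := by
  cases p with
  | nil => exact absurd rfl h
  | cons hadj q => exact ⟨_, hadj, q, rfl⟩

theorem min_vdp_solution_independent_visit {V : Type*} (G : SimpleGraph V)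
    (C I : Finset V) (hsplit : IsSplitPartition G C I)
    {k : ℕ} (X : Fin k → V × V) (hX : ∀ i, (X i).1 ≠ (X i).2)
    (P : WalkFamily G X) (hP : IsMinVDPSolution G X P)
    (i : Fin k) (x : V) (hxI : x ∈ I) (hxnt : ¬ IsTerminal X x)
    (hxP : x ∈ (P i).support) :
    (P i).support = [(X i).1, x, (X i).2] ∧ (X i).1 ∈ C ∧ (X i).2 ∈ C ∧
      ∃ j : Fin k, (X j = ((X i).1, (X i).2) ∨ X j = ((X i).2, (X i).1)) ∧
        (P j).length = 1 := by
  classical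
  obtain ⟨⟨hpath, hdistinct, hpid⟩, hmin⟩ := hP
  have hpid' : ∀ i j : Fin k, i ≠ j → ∀ x : V,
      x ∈ (P i).support.tail.dropLast → x ∉ (P j).support := hpid
  set s := (X i).1 with hs
  set t := (X i).2 with ht
  have hxs : x ≠ s := fun h => hxnt ⟨i, Or.inl h.symm⟩
  have hxt : x ≠ t := fun h => hxnt ⟨i, Or.inr h.symm⟩
  have hWpath : (P i).IsPath := hpath i
  have hspec := (P i).take_spec hxP
  set W1 := (P i).takeUntil x hxP with hW1def
  set W2 := (P i).dropUntil x hxP with hW2def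
  obtain ⟨a, hxa, W1r, hW1r⟩ := walk_exists_cons W1.reverse hxs
  obtain ⟨b, hxb, W2', hW2'⟩ := walk_exists_cons W2 hxt
  have hW1eq : W1 = (Walk.cons hxa W1r).reverse := by rw [← hW1r, Walk.reverse_reverse]
  obtain ⟨l1, hL1⟩ : ∃ l, W1r.reverse.support = s :: l := ⟨_, Walk.support_eq_cons _⟩
  obtain ⟨l2, hL2⟩ : ∃ l, W2'.support = b :: l := ⟨_, Walk.support_eq_cons _⟩
  have hW1sup : W1.support = (s :: l1) ++ [x] := by
    rw [hW1eq, Walk.support_reverse, Walk.support_cons, List.reverse_cons,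
      ← Walk.support_reverse, hL1]
  have hWsup : (P i).support = ((s :: l1) ++ [x]) ++ (b :: l2) := by
    rw [← hspec, Walk.support_append, hW1sup, hW2', Walk.support_cons, List.tail_cons, hL2]
  -- a and b are in the clique
  have haC : a ∈ C := by
    rcases hsplit.1 a with h | h
    · exact h
    · exact absurd hxa (hsplit.2.2.2 x hxI a h)
  have hbC : b ∈ C := by
    rcases hsplit.1 b with h | h
    · exact h
    · exact absurd hxb (hsplit.2.2.2 x hxI b h)
  have hnodup : (((s :: l1) ++ [x]) ++ (b :: l2)).Nodup := by
    rw [← hWsup]; exact hWpath.2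
  have haL1 : a ∈ s :: l1 := by
    rw [← hL1]; exact W1r.reverse.end_mem_support
  have hne_ab : a ≠ b := by
    rw [List.nodup_append] at hnodup
    intro h
    exact hnodup.2.2 a (List.mem_append_left _ haL1) a (by rw [h]; simp) rfl
  have hab : G.Adj a b := hsplit.2.2.1 a haC b hbC hne_ab
  -- the shortcut walk
  set Q : G.Walk s t := W1r.reverse.append (Walk.cons hab W2') with hQdef
  have hQsup : Q.support = (s :: l1) ++ (b :: l2) := by
    rw [hQdef, Walk.support_append, Walk.support_cons, List.tail_cons, hL1, hL2]
  have hQnodup : Q.support.Nodup := by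
    refine List.Sublist.nodup ?_ hnodup
    rw [hQsup, List.append_assoc]
    exact ((b :: l2).sublist_cons_self x).append_left _
  have hQpath : Q.IsPath := (Walk.isPath_def Q).mpr hQnodup
  have hQint : Q.support.tail.dropLast = l1 ++ (b :: l2).dropLast := by
    rw [hQsup, List.cons_append, List.tail_cons,
      List.dropLast_append_of_ne_nil (List.cons_ne_nil b l2)]
  have hWint : (P i).support.tail.dropLast = (l1 ++ [x]) ++ (b :: l2).dropLast := by
    rw [hWsup, List.cons_append, List.cons_append, List.tail_cons,
      List.dropLast_append_of_ne_nil (List.cons_ne_nil b l2)]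
  have hint_sub : ∀ v ∈ Q.support.tail.dropLast, v ∈ (P i).support.tail.dropLast := by
    intro v hv
    rw [hQint] at hv; rw [hWint]
    simp only [List.mem_append, List.mem_singleton] at hv ⊢
    tauto
  have hQsupsub : ∀ v ∈ Q.support, v ∈ (P i).support := by
    intro v hv
    rw [hQsup] at hv; rw [hWsup]
    simp only [List.mem_append, List.mem_singleton] at hv ⊢
    tauto
  have hQlen : Q.length + 1 = (P i).length := by
    have h1 : (P i).length = W1.length + W2.length := by
      rw [← hspec, Walk.length_append]
    have h2 : W1.length = W1r.length + 1 := by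
      rw [hW1eq, Walk.length_reverse, Walk.length_cons]
    have h3 : W2.length = W2'.length + 1 := by rw [hW2', Walk.length_cons]
    have h4 : Q.length = W1r.length + (W2'.length + 1) := by
      rw [hQdef, Walk.length_append, Walk.length_reverse, Walk.length_cons]
    omega
  -- the modified family
  set P' : WalkFamily G X := Function.update P i Q with hP'def
  have hP'i : P' i = Q := Function.update_self i Q P
  have hP'ne : ∀ j, j ≠ i → P' j = P j := fun j hj => Function.update_of_ne hj Q P
  have hP'path : ∀ j, (P' j).IsPath := by
    intro j
    by_cases h : j = i
    · subst h; rw [hP'i]; exact hQpath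
    · rw [hP'ne j h]; exact hpath j
  have hP'pid : PairwiseInternallyDisjoint G X P' := by
    intro j1 j2 hne v hv
    by_cases h1 : j1 = i <;> by_cases h2 : j2 = i
    · exact absurd (h1.trans h2.symm) hne
    · rw [h1, hP'i] at hv
      rw [hP'ne j2 h2]
      exact hpid' i j2 (fun h => h2 h.symm) v (hint_sub v hv)
    · rw [hP'ne j1 h1] at hv
      rw [h2, hP'i]
      intro hvQ
      exact hpid' j1 i (h2 ▸ h1) v hv (hQsupsub v hvQ)
    · rw [hP'ne j1 h1] at hv
      rw [hP'ne j2 h2]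
      exact hpid' j1 j2 hne v hv
  have hsumlt : ∑ j, (P' j).length < ∑ j, (P j).length := by
    have e1 : ∑ j, (P' j).length = Q.length + ∑ j ∈ univ \ {i}, (P j).length := by
      calc ∑ j, (P' j).length
          = ∑ j, Function.update (fun j => (P j).length) i Q.length j := by
            refine Finset.sum_congr rfl fun j _ => ?_
            by_cases h : j = i
            · subst h; rw [hP'i]; simp
            · rw [hP'ne j h, Function.update_of_ne h]
        _ = Q.length + ∑ j ∈ univ \ {i}, (P j).length :=
            Finset.sum_update_of_mem (mem_univ i) _ _
    have e2 : ∑ j, (P j).length = (P i).length + ∑ j ∈ univ \ {i}, (P j).length := by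
      calc ∑ j, (P j).length
          = ∑ j, Function.update (fun j => (P j).length) i ((P i).length) j := by
            refine Finset.sum_congr rfl fun j _ => ?_
            by_cases h : j = i
            · subst h; simp
            · rw [Function.update_of_ne h]
        _ = (P i).length + ∑ j ∈ univ \ {i}, (P j).length :=
            Finset.sum_update_of_mem (mem_univ i) _ _
    omega
  have hndist : ¬ (∀ j1 j2 : Fin k, j1 ≠ j2 → (P' j1).support ≠ (P' j2).support) := by
    intro hd
    have := hmin P' ⟨hP'path, hd, hP'pid⟩
    omega
  push_neg at hndist
  obtain ⟨j1, j2, hnej, heq⟩ := hndist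
  obtain ⟨j, hji, hQPj⟩ : ∃ j, j ≠ i ∧ Q.support = (P j).support := by
    by_cases h1 : j1 = i
    · have h2 : j2 ≠ i := fun h => hnej (h1.trans h.symm)
      rw [h1, hP'i, hP'ne j2 h2] at heq
      exact ⟨j2, h2, heq⟩
    · by_cases h2 : j2 = i
      · subst h2
        exact ⟨j1, h1, by rw [hP'ne j1 h1, hP'i] at heq; exact heq.symm⟩
      · rw [hP'ne j1 h1, hP'ne j2 h2] at heq
        exact absurd heq (hdistinct j1 j2 hnej)
  -- the internal vertices of Q must be empty
  have hintQ : Q.support.tail.dropLast = [] := by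
    rw [List.eq_nil_iff_forall_not_mem]
    intro v hv
    have h1 := hint_sub v hv
    have h2 := hpid' i j (fun h => hji h.symm) v h1
    have h3 : v ∈ Q.support := by
      have := (List.dropLast_sublist _).subset hv
      exact (List.tail_sublist _).subset this
    rw [hQPj] at h3
    exact h2 h3
  rw [hQint, List.append_eq_nil_iff] at hintQ
  obtain ⟨hl1nil, hl2drop⟩ := hintQ
  have hl2nil : l2 = [] := by
    have h := congrArg List.length hl2drop
    simpa using h
  subst hl1nil; subst hl2nil
  -- now a = s and b = t
  have has : a = s := by
    have h := W1r.reverse.end_mem_support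
    rw [hL1] at h
    simpa using h
  have hbt : b = t := by
    have h := W2'.end_mem_support
    rw [hL2] at h
    have h2 : t = b := by simpa using h
    exact h2.symm
  subst has; subst hbt
  have hsupfin : (P i).support = [s, x, t] := by rw [hWsup]; rfl
  have hQsupfin : Q.support = [s, t] := by rw [hQsup]; rfl
  rw [hQsupfin] at hQPj
  have hj1 : (X j).1 = s := by
    have h := (P j).support_eq_cons
    rw [← hQPj] at h
    exact (List.cons_eq_cons.mp h).1.symm
  have hj2 : (X j).2 = t := by
    have h := (P j).end_mem_support
    rw [← hQPj] at h
    simp only [List.mem_cons, List.mem_singleton, List.not_mem_nil, or_false] at h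
    rcases h with h | h
    · exact absurd (hj1.trans h.symm) (hX j)
    · exact h
  have hjlen : (P j).length = 1 := by
    have h : ([s, t] : List V).length = (P j).length + 1 := by
      rw [hQPj]; exact (P j).length_support
    simp at h
    omega
  refine ⟨hsupfin, haC, hbC, j, Or.inl ?_, hjlen⟩
  rw [Prod.ext_iff]
  exact ⟨hj1, hj2⟩
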